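/- arXiv:1103.0023 — 2 statements merged into one kernel-verified Lean document; each statement's English description precedes it below -/
import Mathlib

section
/- With w_ε^α = u_ε^α - v_ε^α - ε χ_k^{αβ}(x/ε) ∂v_ε^β/∂x_k, the conormal derivative satisfies the identity: n_i a_{ij}^{αβ}(x/ε) ∂w_ε^β/∂x_j = n_i a_{ij}^{αβ}(x/ε) ∂u_ε^β/∂x_j - n_i â_{ij}^{αβ} ∂v_ε^β/∂x_j + (ε/2){n_i ∂/∂x_j - n_j ∂/∂x_i}{Ψ_{jik}^{αγ}(x/ε) ∂v_ε^γ/∂x_k} - ε n_i b_{ijk}^{αγ}(x/ε) ∂²v_ε^γ/(∂x_j ∂x_k), where the middle term involves only tangential derivatives. -/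
open MeasureTheory

noncomputable def pd {d : ℕ} (i : Fin d) (f : (Fin d → ℝ) → ℝ) (x : Fin d → ℝ) : ℝ :=
  fderiv ℝ f x (Pi.single i 1)

def Zper {d : ℕ} (f : (Fin d → ℝ) → ℝ) : Prop :=
  ∀ (x : Fin d → ℝ) (z : Fin d → ℤ), f (x + fun i => (z i : ℝ)) = f x

lemma pd_sub {d : ℕ} (j : Fin d) {f g : (Fin d → ℝ) → ℝ} {x : Fin d → ℝ}
    (hf : DifferentiableAt ℝ f x) (hg : DifferentiableAt ℝ g x) :
    pd j (fun y => f y - g y) x = pd j f x - pd j g x := by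
  simp [pd, fderiv_fun_sub hf hg]

lemma pd_neg {d : ℕ} (j : Fin d) (f : (Fin d → ℝ) → ℝ) (x : Fin d → ℝ) :
    pd j (fun y => -f y) x = -pd j f x := by
  simp [pd, fderiv_neg]

lemma pd_const_mul {d : ℕ} (j : Fin d) (c : ℝ) {f : (Fin d → ℝ) → ℝ} {x : Fin d → ℝ}
    (hf : DifferentiableAt ℝ f x) :
    pd j (fun y => c * f y) x = c * pd j f x := by
  simp [pd, fderiv_const_mul hf c]

lemma pd_mul {d : ℕ} (j : Fin d) {f g : (Fin d → ℝ) → ℝ} {x : Fin d → ℝ}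
    (hf : DifferentiableAt ℝ f x) (hg : DifferentiableAt ℝ g x) :
    pd j (fun y => f y * g y) x = pd j f x * g x + f x * pd j g x := by
  rw [pd, fderiv_fun_mul hf hg]
  simp [pd]
  ring

lemma pd_sum {d : ℕ} {ι : Type*} (s : Finset ι) (j : Fin d) (F : ι → (Fin d → ℝ) → ℝ)
    {x : Fin d → ℝ} (hF : ∀ i ∈ s, DifferentiableAt ℝ (F i) x) :
    pd j (fun y => ∑ i ∈ s, F i y) x = ∑ i ∈ s, pd j (F i) x := by
  simp only [pd]
  rw [fderiv_fun_sum hF]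
  simp

lemma pd_comp_smul {d : ℕ} (j : Fin d) (c : ℝ) {f : (Fin d → ℝ) → ℝ} {x : Fin d → ℝ}
    (hf : DifferentiableAt ℝ f (c • x)) :
    pd j (fun y => f (c • y)) x = c * pd j f (c • x) := by
  have hL : DifferentiableAt ℝ (fun y : Fin d → ℝ => c • y) x :=
    (differentiable_id.const_smul c).differentiableAt
  have hcomp : (fun y : Fin d → ℝ => f (c • y)) = f ∘ (fun y => c • y) := rfl
  rw [pd, hcomp, fderiv_comp x hf hL]
  have hfd : fderiv ℝ (fun y : Fin d → ℝ => c • y) x = c • ContinuousLinearMap.id ℝ (Fin d → ℝ) := by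
    have h : (fun y : Fin d → ℝ => c • y) = fun y => (c • ContinuousLinearMap.id ℝ (Fin d → ℝ)) y := rfl
    rw [h, ContinuousLinearMap.fderiv]
  rw [hfd]
  simp [pd, _root_.map_smul]

lemma sum_comm3 {M : Type*} [AddCommMonoid M] {A B C : Type*} [Fintype A] [Fintype B] [Fintype C]
    (f : A → B → C → M) :
    ∑ a, ∑ b, ∑ c, f a b c = ∑ b, ∑ c, ∑ a, f a b c := by
  rw [Finset.sum_comm]
  exact Finset.sum_congr rfl fun b _ => Finset.sum_comm

lemma sum_comm4 {M : Type*} [AddCommMonoid M] {A B C D : Type*} [Fintype A] [Fintype B] [Fintype C]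
    [Fintype D] (f : A → B → C → D → M) :
    ∑ a, ∑ b, ∑ c, ∑ e, f a b c e = ∑ c, ∑ e, ∑ a, ∑ b, f a b c e := by
  calc ∑ a, ∑ b, ∑ c, ∑ e, f a b c e
      = ∑ a, ∑ c, ∑ e, ∑ b, f a b c e :=
        Finset.sum_congr rfl fun a _ => sum_comm3 _
    _ = ∑ c, ∑ e, ∑ a, ∑ b, f a b c e := sum_comm3 _
set_option maxHeartbeats 1600000 in
/-- Lemma 5.1: conormal derivative identity for
`w_ε^α = u_ε^α − v_ε^α − ε χ_k^{αβ}(x/ε) ∂_k v_ε^β`. -/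
theorem conormal_derivative_identity (d m : ℕ) (ε : ℝ) (hε : 0 < ε)
    (a : Fin d → Fin d → Fin m → Fin m → (Fin d → ℝ) → ℝ)
    (ahat : Fin d → Fin d → Fin m → Fin m → ℝ)
    (χ : Fin d → Fin m → Fin m → (Fin d → ℝ) → ℝ)
    (Ψ : Fin d → Fin d → Fin d → Fin m → Fin m → (Fin d → ℝ) → ℝ)
    (u v : Fin m → (Fin d → ℝ) → ℝ)
    (hasmooth : ∀ i j α β, ContDiff ℝ (⊤ : ℕ∞) (a i j α β))
    (haper : ∀ i j α β, Zper (a i j α β))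
    (hχsmooth : ∀ k α β, ContDiff ℝ (⊤ : ℕ∞) (χ k α β))
    (hχper : ∀ k α β, Zper (χ k α β))
    (hΨsmooth : ∀ j i k α γ, ContDiff ℝ (⊤ : ℕ∞) (Ψ j i k α γ))
    (hΨper : ∀ j i k α γ, Zper (Ψ j i k α γ))
    -- Ψ is antisymmetric in its first two indices
    (hΨanti : ∀ j i k α γ y, Ψ j i k α γ y = - Ψ i j k α γ y)
    -- Φ_{ik}^{αγ} = ∂_j Ψ_{jik}^{αγ}, with Φ as in (3.4)
    (hΨΦ : ∀ i k α γ y,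
      ∑ j, pd j (Ψ j i k α γ) y
        = ahat i k α γ - a i k α γ y - ∑ j, ∑ β, a i j α β y * pd j (χ k β γ) y)
    (husmooth : ∀ α, ContDiff ℝ 1 (u α))
    (hvsmooth : ∀ α, ContDiff ℝ 2 (v α)) :
    -- the identity of Lemma 5.1, pointwise for every x and any unit normal vector n
    ∀ (x : Fin d → ℝ) (n : Fin d → ℝ) (α : Fin m),
      (∑ i, ∑ j, ∑ β, n i * a i j α β (ε⁻¹ • x) *
        pd j (fun y => u β y - v β y
          - ε * ∑ k, ∑ γ, χ k β γ (ε⁻¹ • y) * pd k (v γ) y) x)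
      =
      (∑ i, ∑ j, ∑ β, n i * a i j α β (ε⁻¹ • x) * pd j (u β) x)
      - (∑ i, ∑ j, ∑ β, n i * ahat i j α β * pd j (v β) x)
      + (ε / 2) * (∑ i, ∑ j,
          (n i * pd j (fun y => ∑ k, ∑ γ, Ψ j i k α γ (ε⁻¹ • y) * pd k (v γ) y) x
         - n j * pd i (fun y => ∑ k, ∑ γ, Ψ j i k α γ (ε⁻¹ • y) * pd k (v γ) y) x))
      - ε * (∑ i, ∑ j, ∑ k, ∑ γ, n i *
          (Ψ j i k α γ (ε⁻¹ • x)
            + ∑ β, a i j α β (ε⁻¹ • x) * χ k β γ (ε⁻¹ • x))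
          * pd j (pd k (v γ)) x) := by
  intro x n α
  have hεne : ε ≠ 0 := ne_of_gt hε
  have hεε : ε * ε⁻¹ = 1 := mul_inv_cancel₀ hεne
  set y0 : Fin d → ℝ := ε⁻¹ • x with hy0
  have hud : ∀ β, Differentiable ℝ (u β) := fun β => (husmooth β).differentiable one_ne_zero
  have hvd : ∀ γ, Differentiable ℝ (v γ) := fun γ => (hvsmooth γ).differentiable two_ne_zero
  have hvk : ∀ γ k, Differentiable ℝ (pd k (v γ)) := by
    intro γ k
    have h : ContDiff ℝ 1 (fun y => fderiv ℝ (v γ) y (Pi.single k 1)) :=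
      ((hvsmooth γ).fderiv_right (m := 1) (by norm_num)).clm_apply contDiff_const
    exact h.differentiable one_ne_zero
  have hcomp : ∀ f : (Fin d → ℝ) → ℝ, ContDiff ℝ (⊤ : ℕ∞) f →
      Differentiable ℝ (fun y : Fin d → ℝ => f (ε⁻¹ • y)) :=
    fun f hf => (hf.differentiable (by simp)).comp (differentiable_id.const_smul ε⁻¹)
  have key : ∀ (F : Fin d → Fin m → (Fin d → ℝ) → ℝ),
      (∀ k γ, ContDiff ℝ (⊤ : ℕ∞) (F k γ)) → ∀ l : Fin d,
      pd l (fun y => ∑ k, ∑ γ, F k γ (ε⁻¹ • y) * pd k (v γ) y) x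
        = ∑ k, ∑ γ, (ε⁻¹ * pd l (F k γ) y0 * pd k (v γ) x
            + F k γ y0 * pd l (pd k (v γ)) x) := by
    intro F hF l
    have hterm : ∀ k γ, DifferentiableAt ℝ
        (fun y : Fin d → ℝ => F k γ (ε⁻¹ • y) * pd k (v γ) y) x :=
      fun k γ => ((hcomp _ (hF k γ)) x).mul ((hvk γ k) x)
    rw [pd_sum Finset.univ l _ (fun k _ => DifferentiableAt.fun_sum fun γ _ => hterm k γ)]
    refine Finset.sum_congr rfl fun k _ => ?_
    rw [pd_sum Finset.univ l _ (fun γ _ => hterm k γ)]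
    refine Finset.sum_congr rfl fun γ _ => ?_
    rw [pd_mul l ((hcomp _ (hF k γ)) x) ((hvk γ k) x),
      pd_comp_smul l ε⁻¹ (((hF k γ).differentiable (by simp)) (ε⁻¹ • x))]
  have hE1 : ∀ (j : Fin d) (β : Fin m),
      pd j (fun y => u β y - v β y
          - ε * ∑ k, ∑ γ, χ k β γ (ε⁻¹ • y) * pd k (v γ) y) x
      = pd j (u β) x - pd j (v β) x
        - ε * ∑ k, ∑ γ, (ε⁻¹ * pd j (χ k β γ) y0 * pd k (v γ) x
            + χ k β γ y0 * pd j (pd k (v γ)) x) := by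
    intro j β
    have hS : DifferentiableAt ℝ
        (fun y : Fin d → ℝ => ∑ k, ∑ γ, χ k β γ (ε⁻¹ • y) * pd k (v γ) y) x :=
      DifferentiableAt.fun_sum fun k _ => DifferentiableAt.fun_sum fun γ _ =>
        ((hcomp _ (hχsmooth k β γ)) x).mul ((hvk γ k) x)
    have h1 : pd j (fun y => u β y - v β y
          - ε * ∑ k, ∑ γ, χ k β γ (ε⁻¹ • y) * pd k (v γ) y) x
        = pd j (fun y => u β y - v β y) x
          - pd j (fun y => ε * ∑ k, ∑ γ, χ k β γ (ε⁻¹ • y) * pd k (v γ) y) x :=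
      pd_sub j (((hud β) x).sub ((hvd β) x)) (hS.const_mul ε)
    rw [h1, pd_sub j ((hud β) x) ((hvd β) x), pd_const_mul j ε hS,
      key (fun k γ => χ k β γ) (fun k γ => hχsmooth k β γ) j]
  have hE2 : ∀ (i j l : Fin d),
      pd l (fun y => ∑ k, ∑ γ, Ψ j i k α γ (ε⁻¹ • y) * pd k (v γ) y) x
      = ∑ k, ∑ γ, (ε⁻¹ * pd l (Ψ j i k α γ) y0 * pd k (v γ) x
          + Ψ j i k α γ y0 * pd l (pd k (v γ)) x) :=
    fun i j l => key (fun k γ => Ψ j i k α γ) (fun k γ => hΨsmooth j i k α γ) l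
  simp only [hE1, hE2]
  -- antisymmetry step
  have hB : (∑ i, ∑ j, n j * ∑ k, ∑ γ, (ε⁻¹ * pd i (Ψ j i k α γ) y0 * pd k (v γ) x
        + Ψ j i k α γ y0 * pd i (pd k (v γ)) x))
      = -∑ i, ∑ j, n i * ∑ k, ∑ γ, (ε⁻¹ * pd j (Ψ j i k α γ) y0 * pd k (v γ) x
        + Ψ j i k α γ y0 * pd j (pd k (v γ)) x) := by
    have negpull : ∀ f : Fin d → Fin d → ℝ,
        (-∑ i, ∑ j, f i j) = ∑ i, ∑ j, -f i j := by
      intro f; simp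
    rw [Finset.sum_comm, negpull]
    refine Finset.sum_congr rfl fun p _ => Finset.sum_congr rfl fun q _ => ?_
    have inner : ∀ (k : Fin d) (γ : Fin m),
        ε⁻¹ * pd q (Ψ p q k α γ) y0 * pd k (v γ) x + Ψ p q k α γ y0 * pd q (pd k (v γ)) x
        = -(ε⁻¹ * pd q (Ψ q p k α γ) y0 * pd k (v γ) x
            + Ψ q p k α γ y0 * pd q (pd k (v γ)) x) := by
      intro k γ
      have h2 : Ψ q p k α γ = fun y => -Ψ p q k α γ y := funext fun y => hΨanti q p k α γ y
      have h1 : pd q (Ψ q p k α γ) y0 = -pd q (Ψ p q k α γ) y0 := by rw [h2, pd_neg]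
      rw [h1, hΨanti q p k α γ y0]; ring
    simp only [inner, Finset.sum_neg_distrib, mul_neg]
  have h3 : (∑ i, ∑ j,
        (n i * ∑ k, ∑ γ, (ε⁻¹ * pd j (Ψ j i k α γ) y0 * pd k (v γ) x
            + Ψ j i k α γ y0 * pd j (pd k (v γ)) x)
       - n j * ∑ k, ∑ γ, (ε⁻¹ * pd i (Ψ j i k α γ) y0 * pd k (v γ) x
            + Ψ j i k α γ y0 * pd i (pd k (v γ)) x)))
      = 2 * ∑ i, ∑ j, n i * ∑ k, ∑ γ, (ε⁻¹ * pd j (Ψ j i k α γ) y0 * pd k (v γ) x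
            + Ψ j i k α γ y0 * pd j (pd k (v γ)) x) := by
    simp only [Finset.sum_sub_distrib]
    rw [hB, sub_neg_eq_add, two_mul]
  -- the ε·T computation, using hΨΦ
  have hT : ε * (∑ i, ∑ j, n i * ∑ k, ∑ γ, (ε⁻¹ * pd j (Ψ j i k α γ) y0 * pd k (v γ) x
        + Ψ j i k α γ y0 * pd j (pd k (v γ)) x))
      = (∑ i, ∑ j, ∑ β, n i * ahat i j α β * pd j (v β) x)
        - (∑ i, ∑ j, ∑ β, n i * a i j α β y0 * pd j (v β) x)
        - (∑ i, ∑ j, ∑ β, ∑ k, ∑ γ, n i * a i j α β y0 * pd j (χ k β γ) y0 * pd k (v γ) x)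
        + ε * ∑ i, ∑ j, ∑ k, ∑ γ, n i * Ψ j i k α γ y0 * pd j (pd k (v γ)) x := by
    have step1 : ε * (∑ i, ∑ j, n i * ∑ k, ∑ γ, (ε⁻¹ * pd j (Ψ j i k α γ) y0 * pd k (v γ) x
          + Ψ j i k α γ y0 * pd j (pd k (v γ)) x))
        = ∑ i, ∑ j, ∑ k, ∑ γ, (n i * pd j (Ψ j i k α γ) y0 * pd k (v γ) x
          + ε * (n i * Ψ j i k α γ y0 * pd j (pd k (v γ)) x)) := by
      rw [Finset.mul_sum]
      refine Finset.sum_congr rfl fun i _ => ?_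
      rw [Finset.mul_sum]
      refine Finset.sum_congr rfl fun j _ => ?_
      simp only [Finset.mul_sum]
      refine Finset.sum_congr rfl fun k _ => Finset.sum_congr rfl fun γ _ => ?_
      field_simp
    rw [step1]
    simp only [Finset.sum_add_distrib]
    have step2 : ∑ i, ∑ j, ∑ k, ∑ γ, ε * (n i * Ψ j i k α γ y0 * pd j (pd k (v γ)) x)
        = ε * ∑ i, ∑ j, ∑ k, ∑ γ, n i * Ψ j i k α γ y0 * pd j (pd k (v γ)) x := by
      simp only [← Finset.mul_sum]
    rw [step2]
    congr 1
    -- ∑i∑j∑k∑γ n i * pd j Ψ * V1 = S5 - S2 - C3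
    have hswap : ∑ i, ∑ j, ∑ k, ∑ γ, n i * pd j (Ψ j i k α γ) y0 * pd k (v γ) x
        = ∑ i, ∑ k, ∑ γ, ∑ j, n i * pd j (Ψ j i k α γ) y0 * pd k (v γ) x :=
      Finset.sum_congr rfl fun i _ => sum_comm3 _
    rw [hswap]
    have hfac : ∀ (i k : Fin d) (γ : Fin m),
        (∑ j, n i * pd j (Ψ j i k α γ) y0 * pd k (v γ) x)
        = n i * (∑ j, pd j (Ψ j i k α γ) y0) * pd k (v γ) x := by
      intro i k γ
      rw [Finset.mul_sum, Finset.sum_mul]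
    simp only [hfac, hΨΦ]
    have hexp : ∀ (i k : Fin d) (γ : Fin m),
        n i * (ahat i k α γ - a i k α γ y0
            - ∑ j, ∑ β, a i j α β y0 * pd j (χ k β γ) y0) * pd k (v γ) x
        = n i * ahat i k α γ * pd k (v γ) x - n i * a i k α γ y0 * pd k (v γ) x
          - ∑ j, ∑ β, n i * a i j α β y0 * pd j (χ k β γ) y0 * pd k (v γ) x := by
      intro i k γ
      have h : ∑ j, ∑ β, n i * a i j α β y0 * pd j (χ k β γ) y0 * pd k (v γ) x
          = n i * (∑ j, ∑ β, a i j α β y0 * pd j (χ k β γ) y0) * pd k (v γ) x := by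
        rw [Finset.mul_sum, Finset.sum_mul]
        refine Finset.sum_congr rfl fun j _ => ?_
        rw [Finset.mul_sum, Finset.sum_mul]
        refine Finset.sum_congr rfl fun β _ => ?_
        ring
      rw [h]; ring
    simp only [hexp, Finset.sum_sub_distrib]
    congr 1
    refine Finset.sum_congr rfl fun i _ => ?_
    exact sum_comm4 (fun k γ j β => n i * a i j α β y0 * pd j (χ k β γ) y0 * pd k (v γ) x)
  -- expanding the b-term
  have hb : (∑ i, ∑ j, ∑ k, ∑ γ, n i * (Ψ j i k α γ y0
        + ∑ β, a i j α β y0 * χ k β γ y0) * pd j (pd k (v γ)) x)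
      = (∑ i, ∑ j, ∑ k, ∑ γ, n i * Ψ j i k α γ y0 * pd j (pd k (v γ)) x)
        + (∑ i, ∑ j, ∑ β, ∑ k, ∑ γ,
            n i * a i j α β y0 * χ k β γ y0 * pd j (pd k (v γ)) x) := by
    have hper : ∀ (i j k : Fin d) (γ : Fin m),
        n i * (Ψ j i k α γ y0 + ∑ β, a i j α β y0 * χ k β γ y0) * pd j (pd k (v γ)) x
        = n i * Ψ j i k α γ y0 * pd j (pd k (v γ)) x
          + ∑ β, n i * a i j α β y0 * χ k β γ y0 * pd j (pd k (v γ)) x := by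
      intro i j k γ
      have h : ∑ β, n i * a i j α β y0 * χ k β γ y0 * pd j (pd k (v γ)) x
          = n i * (∑ β, a i j α β y0 * χ k β γ y0) * pd j (pd k (v γ)) x := by
        rw [Finset.mul_sum, Finset.sum_mul]
        exact Finset.sum_congr rfl fun β _ => by ring
      rw [h]; ring
    simp only [hper, Finset.sum_add_distrib]
    congr 1
    refine Finset.sum_congr rfl fun i _ => Finset.sum_congr rfl fun j _ => ?_
    exact (sum_comm3 (fun β k γ =>
      n i * a i j α β y0 * χ k β γ y0 * pd j (pd k (v γ)) x)).symm
  -- expanding the left-hand side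
  have hLHS : (∑ i, ∑ j, ∑ β, n i * a i j α β y0 *
        (pd j (u β) x - pd j (v β) x
          - ε * ∑ k, ∑ γ, (ε⁻¹ * pd j (χ k β γ) y0 * pd k (v γ) x
              + χ k β γ y0 * pd j (pd k (v γ)) x)))
      = (∑ i, ∑ j, ∑ β, n i * a i j α β y0 * pd j (u β) x)
        - (∑ i, ∑ j, ∑ β, n i * a i j α β y0 * pd j (v β) x)
        - (∑ i, ∑ j, ∑ β, ∑ k, ∑ γ,
            n i * a i j α β y0 * pd j (χ k β γ) y0 * pd k (v γ) x)
        - ε * ∑ i, ∑ j, ∑ β, ∑ k, ∑ γ,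
            n i * a i j α β y0 * χ k β γ y0 * pd j (pd k (v γ)) x := by
    have hper : ∀ (i j : Fin d) (β : Fin m),
        n i * a i j α β y0 * (pd j (u β) x - pd j (v β) x
          - ε * ∑ k, ∑ γ, (ε⁻¹ * pd j (χ k β γ) y0 * pd k (v γ) x
              + χ k β γ y0 * pd j (pd k (v γ)) x))
        = n i * a i j α β y0 * pd j (u β) x - n i * a i j α β y0 * pd j (v β) x
          - ∑ k, ∑ γ, n i * a i j α β y0 * pd j (χ k β γ) y0 * pd k (v γ) x
          - ε * ∑ k, ∑ γ, n i * a i j α β y0 * χ k β γ y0 * pd j (pd k (v γ)) x := by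
      intro i j β
      have h1 : (∑ k, ∑ γ, n i * a i j α β y0 * pd j (χ k β γ) y0 * pd k (v γ) x)
          + ε * ∑ k, ∑ γ, n i * a i j α β y0 * χ k β γ y0 * pd j (pd k (v γ)) x
          = n i * a i j α β y0 *
            (ε * ∑ k, ∑ γ, (ε⁻¹ * pd j (χ k β γ) y0 * pd k (v γ) x
              + χ k β γ y0 * pd j (pd k (v γ)) x)) := by
        simp only [Finset.mul_sum]
        simp only [← Finset.sum_add_distrib]
        refine Finset.sum_congr rfl fun k _ => Finset.sum_congr rfl fun γ _ => ?_
        field_simp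
      rw [mul_sub, mul_sub, ← h1]
      ring
    simp only [hper, Finset.sum_sub_distrib]
    have hpull : ∑ i, ∑ j, ∑ β, ε * (∑ k, ∑ γ,
          n i * a i j α β y0 * χ k β γ y0 * pd j (pd k (v γ)) x)
        = ε * ∑ i, ∑ j, ∑ β, ∑ k, ∑ γ,
          n i * a i j α β y0 * χ k β γ y0 * pd j (pd k (v γ)) x := by
      simp only [← Finset.mul_sum]
    rw [hpull]
  rw [hLHS, h3]
  have hhalf : ∀ t : ℝ, ε / 2 * (2 * t) = ε * t := fun t => by ring
  rw [hhalf, hT, hb]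
  ring
end

section
/- For any a ≥ 0, the function φ_a(t) = (ln(1/t + e^a))^a is decreasing on (0,∞) and the function t ↦ t·φ_a(t) is increasing on (0,∞). -/
/-- for `a ≥ 0`, `φ_a(t) = (log(1/t + e^a))^a` is decreasing on `(0,∞)`
and `t ↦ t·φ_a(t)` is increasing on `(0,∞)`. -/
theorem phi_monotonicity (a : ℝ) (ha : 0 ≤ a) :
    AntitoneOn (fun t : ℝ => (Real.log (1 / t + Real.exp a)) ^ a) (Set.Ioi 0) ∧
    MonotoneOn (fun t : ℝ => t * (Real.log (1 / t + Real.exp a)) ^ a) (Set.Ioi 0) := by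
  have hc1 : (1:ℝ) ≤ Real.exp a := Real.one_le_exp ha
  have hL : ∀ t : ℝ, 0 < t → a < Real.log (1 / t + Real.exp a) := by
    intro t ht
    calc a = Real.log (Real.exp a) := (Real.log_exp a).symm
      _ < Real.log (1 / t + Real.exp a) :=
        Real.log_lt_log (Real.exp_pos a) (lt_add_of_pos_left _ (by positivity))
  have hmono_log : ∀ t s : ℝ, 0 < t → t ≤ s →
      Real.log (1 / s + Real.exp a) ≤ Real.log (1 / t + Real.exp a) := by
    intro t s ht hts
    have hs : 0 < s := lt_of_lt_of_le ht hts
    apply Real.log_le_log (by positivity)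
    have : 1 / s ≤ 1 / t := one_div_le_one_div_of_le ht hts
    linarith
  constructor
  · intro t ht s hs hts
    simp only [Set.mem_Ioi] at ht hs
    exact Real.rpow_le_rpow (le_of_lt (lt_of_le_of_lt ha (hL s hs)))
      (hmono_log t s ht hts) ha
  · intro t ht s hs hts
    simp only [Set.mem_Ioi] at ht hs
    rcases eq_or_lt_of_le ha with h0 | h0
    · simp only [← h0, Real.rpow_zero, mul_one]
      exact hts
    · set c := Real.exp a with hc
      set Lt := Real.log (1 / t + c) with hLtdef
      set Ls := Real.log (1 / s + c) with hLsdef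
      have hLs_pos : 0 < Ls := lt_of_le_of_lt ha (hL s hs)
      have hLt_pos : 0 < Lt := lt_of_le_of_lt ha (hL t ht)
      have hLsLt : Ls ≤ Lt := hmono_log t s ht hts
      have hstep1 : a * (Real.log Lt - Real.log Ls) ≤ Lt - Ls := by
        have h1 : Real.log Lt - Real.log Ls = Real.log (Lt / Ls) :=
          (Real.log_div hLt_pos.ne' hLs_pos.ne').symm
        have h2 : Real.log (Lt / Ls) ≤ Lt / Ls - 1 :=
          Real.log_le_sub_one_of_pos (by positivity)
        have heq : Lt / Ls - 1 = (Lt - Ls) / Ls := by field_simp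
        have h3 : a * ((Lt - Ls) / Ls) ≤ Lt - Ls := by
          have ha' : a ≤ Ls := (hL s hs).le
          calc a * ((Lt - Ls) / Ls)
              ≤ Ls * ((Lt - Ls) / Ls) :=
                mul_le_mul_of_nonneg_right ha'
                  (div_nonneg (sub_nonneg.mpr hLsLt) hLs_pos.le)
            _ = Lt - Ls := by field_simp
        calc a * (Real.log Lt - Real.log Ls)
            ≤ a * (Lt / Ls - 1) := by
              rw [h1]; exact mul_le_mul_of_nonneg_left h2 ha
          _ = a * ((Lt - Ls) / Ls) := by rw [heq]
          _ ≤ Lt - Ls := h3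
      have hstep2 : Lt - Ls ≤ Real.log s - Real.log t := by
        have hp1 : (0:ℝ) < 1 / t + c := by positivity
        have hp2 : (0:ℝ) < 1 / s + c := by positivity
        have h4 : (1 / t + c) / (1 / s + c) ≤ s / t := by
          rw [div_le_div_iff₀ hp2 ht]
          have hct : c * t ≤ c * s := mul_le_mul_of_nonneg_left hts (by positivity)
          field_simp
          nlinarith
        calc Lt - Ls = Real.log ((1 / t + c) / (1 / s + c)) := by
              rw [Real.log_div hp1.ne' hp2.ne']
          _ ≤ Real.log (s / t) := Real.log_le_log (by positivity) h4
          _ = Real.log s - Real.log t := Real.log_div hs.ne' ht.ne'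
      have hfin : a * Real.log Lt + Real.log t ≤ a * Real.log Ls + Real.log s := by
        linarith
      have e1 : t * Lt ^ a = Real.exp (a * Real.log Lt + Real.log t) := by
        rw [Real.exp_add, Real.exp_log ht, Real.rpow_def_of_pos hLt_pos]
        ring
      have e2 : s * Ls ^ a = Real.exp (a * Real.log Ls + Real.log s) := by
        rw [Real.exp_add, Real.exp_log hs, Real.rpow_def_of_pos hLs_pos]
        ring
      calc t * Lt ^ a = Real.exp (a * Real.log Lt + Real.log t) := e1
        _ ≤ Real.exp (a * Real.log Ls + Real.log s) := Real.exp_le_exp.mpr hfin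
        _ = s * Ls ^ a := e2.symm
end
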